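/- One-step error bound for noisy Kaczmarz: in the setting of the noisy randomized Kaczmarz theorem, conditional on x*_{k-1}, the next iterate satisfies 𝔼‖x*_k - x‖² ≤ (1 - 1/R) ‖x*_{k-1} - x‖² + γ², where γ = max_i |r_i|/‖a_i‖. -/

import Mathlib

open Finset

/-- Euclidean norm on `Fin k → ℝ`. -/
noncomputable def enorm2 {k : ℕ} (v : Fin k → ℝ) : ℝ := Real.sqrt (∑ j, v j ^ 2)

/-- Standard inner product on `Fin k → ℝ`. -/
noncomputable def ip {k : ℕ} (v w : Fin k → ℝ) : ℝ := ∑ j, v j * w j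

/-- Frobenius norm of a matrix. -/
noncomputable def frob {m n : ℕ} (A : Matrix (Fin m) (Fin n) ℝ) : ℝ :=
  Real.sqrt (∑ i, ∑ j, A i j ^ 2)

/-- `‖A⁻¹‖ = inf {M : M‖Az‖ ≥ ‖z‖ for all z}`. -/
noncomputable def invNorm {m n : ℕ} (A : Matrix (Fin m) (Fin n) ℝ) : ℝ :=
  sInf {M : ℝ | ∀ z : Fin n → ℝ, enorm2 z ≤ M * enorm2 (A.mulVec z)}

lemma enorm2_nonneg {k : ℕ} (v : Fin k → ℝ) : 0 ≤ enorm2 v := Real.sqrt_nonneg _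

lemma enorm2_sq {k : ℕ} (v : Fin k → ℝ) : enorm2 v ^ 2 = ∑ j, v j ^ 2 :=
  Real.sq_sqrt (by positivity)

lemma enorm2_pos {k : ℕ} {v : Fin k → ℝ} (hv : v ≠ 0) : 0 < enorm2 v := by
  obtain ⟨j, hj⟩ := Function.ne_iff.mp hv
  exact Real.sqrt_pos.mpr (Finset.sum_pos' (fun j _ => by positivity)
    ⟨j, Finset.mem_univ j, by have := abs_pos.mpr hj; nlinarith [sq_abs (v j)]⟩)

lemma pinorm_le_enorm {k : ℕ} (v : Fin k → ℝ) : ‖v‖ ≤ enorm2 v := by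
  refine pi_norm_le_iff_of_nonneg (enorm2_nonneg v) |>.mpr fun j => ?_
  rw [Real.norm_eq_abs, ← Real.sqrt_sq_eq_abs]
  exact Real.sqrt_le_sqrt (Finset.single_le_sum (f := fun i => v i ^ 2)
    (fun i _ => sq_nonneg _) (Finset.mem_univ j))

lemma enorm_le_pinorm {k : ℕ} (v : Fin k → ℝ) : enorm2 v ≤ Real.sqrt k * ‖v‖ := by
  have h1 : (∑ j, v j ^ 2) ≤ (k : ℝ) * ‖v‖ ^ 2 := by
    calc (∑ j, v j ^ 2) ≤ ∑ _j : Fin k, ‖v‖ ^ 2 := by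
          refine Finset.sum_le_sum fun j _ => ?_
          have h := norm_le_pi_norm v j
          rw [Real.norm_eq_abs] at h
          rw [← sq_abs]
          exact pow_le_pow_left₀ (abs_nonneg _) h 2
      _ = (k : ℝ) * ‖v‖ ^ 2 := by simp [mul_comm]
  calc enorm2 v ≤ Real.sqrt ((k : ℝ) * ‖v‖ ^ 2) := Real.sqrt_le_sqrt h1
    _ = Real.sqrt k * ‖v‖ := by
        rw [Real.sqrt_mul (by positivity), Real.sqrt_sq (norm_nonneg v)]

lemma invNorm_spec {m n : ℕ} (hn : 0 < n) (A : Matrix (Fin m) (Fin n) ℝ)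
    (hrank : A.rank = n) :
    0 < invNorm A ∧ ∀ z, enorm2 z ≤ invNorm A * enorm2 (A.mulVec z) := by
  set S := {M : ℝ | ∀ z : Fin n → ℝ, enorm2 z ≤ M * enorm2 (A.mulVec z)} with hS
  set z₀ : Fin n → ℝ := Pi.single ⟨0, hn⟩ 1 with hz₀def
  have hz₀ : enorm2 z₀ = 1 := by
    have : (∑ j, z₀ j ^ 2) = 1 := by
      simp [hz₀def, Pi.single_apply, ite_pow, Finset.sum_ite_eq']
    rw [enorm2, this, Real.sqrt_one]
  have hpos' : ∀ M ∈ S, 0 < M := by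
    intro M hM
    have h1 := hM z₀
    rw [hz₀] at h1
    nlinarith [enorm2_nonneg (A.mulVec z₀)]
  -- nonempty
  have hker : LinearMap.ker A.mulVecLin = ⊥ := by
    have h1 := LinearMap.finrank_range_add_finrank_ker A.mulVecLin
    have h2 : Module.finrank ℝ (LinearMap.range A.mulVecLin) = n := hrank
    rw [h2, Module.finrank_fin_fun] at h1
    have h3 : Module.finrank ℝ (LinearMap.ker A.mulVecLin) = 0 := by omega
    exact Submodule.finrank_eq_zero.mp h3
  obtain ⟨g, hg⟩ := LinearMap.exists_leftInverse_of_injective A.mulVecLin hker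
  set G := LinearMap.toContinuousLinearMap g with hG
  have hSmem : (Real.sqrt n * ‖G‖) ∈ S := by
    intro z
    have h1 : g (A.mulVec z) = z := by
      have := congrFun (congrArg (DFunLike.coe) hg) z
      simpa [Matrix.mulVecLin_apply] using this
    calc enorm2 z = enorm2 (g (A.mulVec z)) := by rw [h1]
      _ ≤ Real.sqrt n * ‖g (A.mulVec z)‖ := enorm_le_pinorm _
      _ ≤ Real.sqrt n * (‖G‖ * ‖A.mulVec z‖) := by
          refine mul_le_mul_of_nonneg_left ?_ (Real.sqrt_nonneg _)
          exact G.le_opNorm _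
      _ ≤ Real.sqrt n * (‖G‖ * enorm2 (A.mulVec z)) := by
          refine mul_le_mul_of_nonneg_left ?_ (Real.sqrt_nonneg _)
          exact mul_le_mul_of_nonneg_left (pinorm_le_enorm _) (norm_nonneg _)
      _ = Real.sqrt n * ‖G‖ * enorm2 (A.mulVec z) := by ring
  have hbdd : BddBelow S := ⟨0, fun M hM => (hpos' M hM).le⟩
  have hclosed : IsClosed S := by
    have heq : S = ⋂ z : Fin n → ℝ, {M : ℝ | enorm2 z ≤ M * enorm2 (A.mulVec z)} := by
      ext M; simp [hS, Set.mem_iInter]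
    rw [heq]
    exact isClosed_iInter fun z =>
      isClosed_le continuous_const (continuous_id.mul continuous_const)
  have hmem : sInf S ∈ S := hclosed.csInf_mem ⟨_, hSmem⟩ hbdd
  exact ⟨hpos' _ hmem, hmem⟩

/-- One-step error bound for noisy randomized Kaczmarz. -/
theorem stmt_10 (m n : ℕ) (A : Matrix (Fin m) (Fin n) ℝ) (hrank : A.rank = n)
    (hrows : ∀ i, A i ≠ 0) (x y : Fin n → ℝ) (b r : Fin m → ℝ)
    (hb : ∀ i, ip (A i) x = b i) :
    ∑ i, (enorm2 (A i) ^ 2 / frob A ^ 2) *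
        enorm2 ((y + ((b i + r i - ip (A i) y) / enorm2 (A i) ^ 2) • A i) - x) ^ 2 ≤
      (1 - 1 / (invNorm A ^ 2 * frob A ^ 2)) * enorm2 (y - x) ^ 2 +
        (⨆ i, |r i| / enorm2 (A i)) ^ 2 := by
  rcases Nat.eq_zero_or_pos m with hm | hm
  · subst hm
    have : frob A = 0 := by simp [frob]
    simp only [Finset.univ_eq_empty, Finset.sum_empty, this, Real.iSup_of_isEmpty]
    have : (0:ℝ) ^ 2 = 0 := by norm_num
    rw [this, mul_zero, div_zero]
    nlinarith [sq_nonneg (enorm2 (y - x))]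
  · have i0 : Fin m := ⟨0, hm⟩
    have hn : 0 < n := by
      rcases Nat.eq_zero_or_pos n with h | h
      · exfalso
        apply hrows i0
        subst h
        exact Subsingleton.elim _ _
      · exact h
    obtain ⟨hNpos, hN⟩ := invNorm_spec hn A hrank
    set N := invNorm A with hNdef
    have hα : ∀ i, 0 < enorm2 (A i) ^ 2 := fun i => pow_pos (enorm2_pos (hrows i)) 2
    have hF2 : frob A ^ 2 = ∑ i, enorm2 (A i) ^ 2 := by
      rw [frob, Real.sq_sqrt (by positivity)]
      exact Finset.sum_congr rfl fun i _ => (enorm2_sq (A i)).symm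
    have hFpos : (0:ℝ) < frob A ^ 2 := by
      rw [hF2]
      exact Finset.sum_pos' (fun i _ => (hα i).le) ⟨i0, Finset.mem_univ i0, hα i0⟩
    set D := enorm2 (y - x) ^ 2 with hD
    set t : Fin m → ℝ := fun i => ip (A i) (y - x) with ht
    set γ := ⨆ i, |r i| / enorm2 (A i) with hγdef
    have hDsum : D = ∑ j, (y j - x j) ^ 2 := by
      rw [hD, enorm2_sq]
      exact Finset.sum_congr rfl fun j _ => by simp
    have htsum : ∀ i, t i = ∑ j, A i j * (y j - x j) := by
      intro i
      simp [ht, ip]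
    have hterm : ∀ i, enorm2 ((y + ((b i + r i - ip (A i) y) / enorm2 (A i) ^ 2) • A i) - x) ^ 2
        = D + (r i ^ 2 - t i ^ 2) / enorm2 (A i) ^ 2 := by
      intro i
      have hαi := hα i
      set α := enorm2 (A i) ^ 2 with hαdef
      have hα0 : α ≠ 0 := ne_of_gt hαi
      set c := (b i + r i - ip (A i) y) / α with hc
      have hipsub : ip (A i) (y - x) = ip (A i) y - ip (A i) x := by
        simp [ip, Pi.sub_apply, mul_sub, Finset.sum_sub_distrib]
      have hcval : c = (r i - t i) / α := by
        rw [hc, ht]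
        congr 1
        simp only [hipsub, hb i]
        ring
      have h1 : (∑ j, ((y + c • A i) - x) j ^ 2)
          = (∑ j, (y j - x j) ^ 2) + (2 * c) * (∑ j, A i j * (y j - x j))
            + c ^ 2 * (∑ j, A i j ^ 2) := by
        rw [Finset.mul_sum, Finset.mul_sum, ← Finset.sum_add_distrib, ← Finset.sum_add_distrib]
        refine Finset.sum_congr rfl fun j _ => ?_
        simp only [Pi.add_apply, Pi.sub_apply, Pi.smul_apply, smul_eq_mul]
        ring
      have h2 : enorm2 ((y + c • A i) - x) ^ 2 = D + 2 * c * t i + c ^ 2 * α := by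
        rw [enorm2_sq, h1, hDsum, htsum i, hαdef, enorm2_sq]
      rw [h2, hcval]
      field_simp
      ring
    have key : (∑ i, (enorm2 (A i) ^ 2 / frob A ^ 2) *
          enorm2 ((y + ((b i + r i - ip (A i) y) / enorm2 (A i) ^ 2) • A i) - x) ^ 2)
        = D + (∑ i, r i ^ 2) / frob A ^ 2 - (∑ i, t i ^ 2) / frob A ^ 2 := by
      have step : ∀ i ∈ Finset.univ, (enorm2 (A i) ^ 2 / frob A ^ 2) *
            enorm2 ((y + ((b i + r i - ip (A i) y) / enorm2 (A i) ^ 2) • A i) - x) ^ 2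
          = D * (enorm2 (A i) ^ 2 / frob A ^ 2) + r i ^ 2 / frob A ^ 2
            - t i ^ 2 / frob A ^ 2 := by
        intro i _
        have h0 : enorm2 (A i) ≠ 0 := ne_of_gt (enorm2_pos (hrows i))
        rw [hterm i]
        field_simp
        ring
      rw [Finset.sum_congr rfl step, Finset.sum_sub_distrib, Finset.sum_add_distrib,
        ← Finset.mul_sum, ← Finset.sum_div, ← Finset.sum_div, ← Finset.sum_div,
        ← hF2, div_self (ne_of_gt hFpos), mul_one]
    have hγle : ∀ i, |r i| ≤ γ * enorm2 (A i) := by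
      intro i
      have hb2 : BddAbove (Set.range fun i => |r i| / enorm2 (A i)) :=
        Set.Finite.bddAbove (Set.finite_range _)
      have h := le_ciSup hb2 i
      rw [div_le_iff₀ (enorm2_pos (hrows i))] at h
      exact h
    have hγ0 : (0:ℝ) ≤ γ := by
      have hb2 : BddAbove (Set.range fun i => |r i| / enorm2 (A i)) :=
        Set.Finite.bddAbove (Set.finite_range _)
      exact le_trans (div_nonneg (abs_nonneg _) (enorm2_nonneg _)) (le_ciSup hb2 i0)
    have hr2 : (∑ i, r i ^ 2) / frob A ^ 2 ≤ γ ^ 2 := by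
      rw [div_le_iff₀ hFpos]
      calc (∑ i, r i ^ 2) ≤ ∑ i, γ ^ 2 * enorm2 (A i) ^ 2 := by
            refine Finset.sum_le_sum fun i _ => ?_
            have h := hγle i
            nlinarith [abs_nonneg (r i), sq_abs (r i), enorm2_nonneg (A i)]
        _ = γ ^ 2 * frob A ^ 2 := by rw [← Finset.mul_sum, hF2]
    have htD : D ≤ N ^ 2 * ∑ i, t i ^ 2 := by
      have h1 := hN (y - x)
      have h2 : enorm2 (A.mulVec (y - x)) ^ 2 = ∑ i, t i ^ 2 := by
        rw [enorm2_sq]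
        refine Finset.sum_congr rfl fun i _ => ?_
        rw [htsum i]
        congr 1
      have h3 : D ≤ (N * enorm2 (A.mulVec (y - x))) ^ 2 := by
        rw [hD]
        exact pow_le_pow_left₀ (enorm2_nonneg _) h1 2
      calc D ≤ (N * enorm2 (A.mulVec (y - x))) ^ 2 := h3
        _ = N ^ 2 * ∑ i, t i ^ 2 := by rw [mul_pow, h2]
    have hst : D / (N ^ 2 * frob A ^ 2) ≤ (∑ i, t i ^ 2) / frob A ^ 2 := by
      rw [div_le_div_iff₀ (by positivity) hFpos]
      nlinarith [hFpos]
    rw [key]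
    have hfin : (1 - 1 / (N ^ 2 * frob A ^ 2)) * D = D - D / (N ^ 2 * frob A ^ 2) := by
      ring
    linarith [hr2, hst]
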